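/- Let ρ : T^d → [0,∞) with ∫ρ = 1, let d > 2, 2* = 2d/(d−2), r > d with conjugate q, and ν ∈ (0,1) with ν > 2/r + 2/2*. Set μ = (1 − 1/q)/(ν − 2/2*). Then 0 < 2μ < 1, and if additionally the Sobolev bound ‖ρ^{ν/2}‖_{L^{2*}} ≤ C₀(1 + ‖D(ρ^{ν/2})‖_{L^2}) holds, then ‖ρ‖_{L^q(T^d)} ≤ C + C ‖D(ρ^{ν/2})‖_{L^2(T^d)}^{2μ} for a constant C depending on C₀, d, q, ν. -/

import Mathlib

open MeasureTheory
open scoped ENNReal NNReal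


private lemma stmt17_aux (C₀ G p : ℝ) (hC₀ : 0 < C₀) (hG : 0 ≤ G)
    (hp0 : 0 < p) (hp1 : p ≤ 1) :
    (C₀ * (1 + G)) ^ p ≤ (C₀ ^ p + 1) + (C₀ ^ p + 1) * G ^ p := by
  have hmul : (C₀ * (1 + G)) ^ p = C₀ ^ p * (1 + G) ^ p :=
    Real.mul_rpow hC₀.le (by linarith)
  have hsub : (1 + G) ^ p ≤ 1 + G ^ p := by
    have h := NNReal.rpow_add_le_add_rpow (1 : ℝ≥0) (⟨G, hG⟩ : ℝ≥0) hp0.le hp1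
    have h2 := NNReal.coe_le_coe.mpr h
    simpa using Real.rpow_add_le_add_rpow zero_le_one hG hp0.le hp1
  have hC0p : 0 ≤ C₀ ^ p := Real.rpow_nonneg hC₀.le _
  have hGp : 0 ≤ G ^ p := Real.rpow_nonneg hG _
  have h1 : C₀ ^ p * (1 + G) ^ p ≤ C₀ ^ p * (1 + G ^ p) :=
    mul_le_mul_of_nonneg_left hsub hC0p
  have h2 : C₀ ^ p * G ^ p ≤ (C₀ ^ p + 1) * G ^ p :=
    mul_le_mul_of_nonneg_right (by linarith) hGp
  nlinarith [h1, h2]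

set_option maxHeartbeats 1000000 in
/-- Let `d > 2`, `2* = 2d/(d−2)`, `r > d` with conjugate `q`,
`ν ∈ (0,1)` with `ν > 2/r + 2/2*`, and `μ = (1 − 1/q)/(ν − 2/2*)`. Then
`0 < 2μ < 1`, and for any probability density `ρ ≥ 0` on the `d`-torus
satisfying the Sobolev bound `‖ρ^{ν/2}‖_{L^{2*}} ≤ C₀(1 + G)` (where `G`
plays the role of `‖D(ρ^{ν/2})‖_{L²}`), one has
`‖ρ‖_{L^q} ≤ C + C G^{2μ}` with `C` depending only on `C₀, d, q, ν`. -/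
theorem stmt17 (d : ℕ) (hd : 2 < d) (r q ν μ : ℝ) (hr : (d : ℝ) < r)
    (hrq : 1 / r + 1 / q = 1) (hν0 : 0 < ν) (hν1 : ν < 1)
    (hνbig : 2 / r + 2 / (2 * (d : ℝ) / ((d : ℝ) - 2)) < ν)
    (hμ : μ = (1 - 1 / q) / (ν - 2 / (2 * (d : ℝ) / ((d : ℝ) - 2)))) :
    (0 < 2 * μ ∧ 2 * μ < 1) ∧
    ∀ C₀ > (0 : ℝ), ∃ C > (0 : ℝ),
      ∀ (ρ : (Fin d → AddCircle (1 : ℝ)) → ℝ) (G : ℝ),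
        Measurable ρ → (∀ x, 0 ≤ ρ x) → Integrable ρ → ∫ x, ρ x = 1 → 0 ≤ G →
        eLpNorm (fun x => ρ x ^ (ν / 2))
            (ENNReal.ofReal (2 * (d : ℝ) / ((d : ℝ) - 2))) volume
          ≤ ENNReal.ofReal (C₀ * (1 + G)) →
        eLpNorm ρ (ENNReal.ofReal q) volume
          ≤ ENNReal.ofReal (C + C * G ^ (2 * μ)) := by
  have hD : (2:ℝ) < (d:ℝ) := by exact_mod_cast hd
  set D : ℝ := (d:ℝ) with hDdef
  have hD0 : (0:ℝ) < D := by linarith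
  have hD2 : (0:ℝ) < D - 2 := by linarith
  set P : ℝ := 2 * D / (D - 2) with hPdef
  have hP0 : 0 < P := by positivity
  have h2P : 2 / P = (D - 2) / D := by
    rw [hPdef]; field_simp
  -- q facts
  have hr2 : (2:ℝ) < r := lt_trans hD hr
  have hr0 : (0:ℝ) < r := by linarith
  have hinvr : 1 / r < 1 / 2 := by
    rw [div_lt_div_iff₀ hr0 (by norm_num)]; linarith
  have hinvr0 : 0 < 1 / r := by positivity
  have hq_half : 1 / 2 < 1 / q := by linarith
  have hinvq1 : 1 / q < 1 := by linarith
  have hq0 : 0 < q := one_div_pos.mp (by linarith)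
  have hq1 : 1 < q := by
    have := (div_lt_one hq0).mp hinvq1
    linarith
  have hq2 : q < 2 := by
    have h := hq_half
    rw [div_lt_div_iff₀ (by norm_num) hq0] at h
    linarith
  have hu : q * (1 / q) = 1 := by field_simp
  set u : ℝ := 1 / q with hudef
  have hu0 : 0 < u := by positivity
  -- key inequality with 1/r = 1 - u
  have hru : 1 / r = 1 - u := by linarith
  have hkey : 2 * (1 - u) + (D - 2) / D < ν := by
    have h := hνbig
    rw [h2P] at h
    have h2 : 2 / r = 2 * (1 - u) := by rw [← hru]; ring
    linarith
  -- denominator positivity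
  have hden : 0 < ν - (D - 2) / D := by
    have h1 : (0:ℝ) < 2 * (1 - u) := by
      have : u < 1 := by linarith
      linarith
    linarith
  have hμ' : μ = (1 - u) / (ν - (D - 2) / D) := by
    rw [hμ, h2P]
  have h2μpos : 0 < 2 * μ := by
    rw [hμ']
    have : 0 < 1 - u := by linarith [hinvr0, hru]
    positivity
  have h2μ1 : 2 * μ < 1 := by
    rw [hμ']
    have : (1 - u) / (ν - (D - 2) / D) < 1 / 2 := by
      rw [div_lt_div_iff₀ hden (by norm_num)]
      linarith
    linarith
  refine ⟨⟨h2μpos, h2μ1⟩, ?_⟩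
  intro C₀ hC₀
  refine ⟨C₀ ^ (2 * μ) + 1, by positivity, ?_⟩
  intro ρ G hmeas hnn hint hInt hG hSob
  set s : ℝ := ν / 2 * P with hsdef
  have hsD : s = ν * D / (D - 2) := by rw [hsdef, hPdef]; field_simp
  have hqs : q < s := by
    rw [hsD, lt_div_iff₀ hD2]
    have h2 : (2*(1-u)+(D-2)/D)*D < ν*D := mul_lt_mul_of_pos_right hkey hD0
    have h2' : 2*(1-u)*D + (D-2) < ν*D := by
      have heq : (2*(1-u)+(D-2)/D)*D = 2*(1-u)*D + (D-2) := by field_simp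
      linarith [heq ▸ h2]
    have h3 : 0 ≤ 2*D*u - (D-2) := by nlinarith [mul_pos hD0 (by linarith : (0:ℝ) < 2*u-1)]
    have h4 : 0 ≤ (q-1)*(2*D*u-(D-2)) := mul_nonneg (by linarith) h3
    have h5 : (q-1)*(2*D*u-(D-2)) = 2*D*(q*u) - 2*D*u - q*(D-2) + (D-2) := by ring
    rw [hu] at h5
    linarith [h5 ▸ h4]
  have hs1 : 1 < s := lt_trans hq1 hqs
  have hs1' : s - 1 ≠ 0 := by linarith
  set β : ℝ := (q - 1) / (s - 1) with hβdef
  have hβpos : 0 < β := div_pos (by linarith) (by linarith)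
  have hβ1 : β ≤ 1 := by rw [div_le_one (by linarith)]; linarith
  have hβs : β * (s - 1) = q - 1 := by
    rw [hβdef, div_mul_cancel₀ _ hs1']
  have hqβ : (1 - β) + s * β = q := by nlinarith [hβs]
  have hνD : 0 < ν * D - D + 2 := by
    have h := mul_pos hden hD0
    have he : (ν - (D - 2) / D) * D = ν * D - D + 2 := by field_simp; ring
    linarith [he ▸ h]
  have hs1e : s - 1 = (ν * D - D + 2) / (D - 2) := by
    rw [hsD]; field_simp; ring
  have hdenE : ν - (D - 2) / D = (ν * D - D + 2) / D := by field_simp; ring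
  have hqne : q ≠ 0 := hq0.ne'
  have hνDne : ν * D - D + 2 ≠ 0 := hνD.ne'
  have hDne : D ≠ 0 := hD0.ne'
  have hD2ne : D - 2 ≠ 0 := hD2.ne'
  have hPβ : P * β = 2 * D * (q - 1) / (ν * D - D + 2) := by
    rw [hβdef, hs1e, hPdef]
    field_simp <;> ring
  have hμe : μ = (q - 1) * D / (q * (ν * D - D + 2)) := by
    rw [hμ', hdenE, hudef]
    field_simp <;> ring
  have hexp : P * β / q = 2 * μ := by
    rw [hPβ, hμe]
    field_simp <;> ring
  -- ENNReal side
  set F : (Fin d → AddCircle (1:ℝ)) → ℝ≥0∞ := fun x => ENNReal.ofReal (ρ x) with hFdef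
  have hFmeas : Measurable F := hmeas.ennreal_ofReal
  have hF1 : ∫⁻ x, F x = 1 := by
    have h := ofReal_integral_eq_lintegral_ofReal hint (Filter.Eventually.of_forall hnn)
    rw [hInt] at h
    simpa using h.symm
  set M : ℝ≥0∞ := ENNReal.ofReal (C₀ * (1 + G)) with hMdef
  have hPne : ENNReal.ofReal P ≠ 0 := (ENNReal.ofReal_pos.mpr hP0).ne'
  have hFs_meas : Measurable fun x => F x ^ s := hFmeas.pow_const s
  have hSob' : (∫⁻ x, F x ^ s) ≤ M ^ P := by
    rw [eLpNorm_eq_lintegral_rpow_enorm_toReal hPne ENNReal.ofReal_ne_top,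
      ENNReal.toReal_ofReal hP0.le] at hSob
    have h2 := ENNReal.rpow_le_rpow hSob hP0.le
    rw [← ENNReal.rpow_mul, one_div, inv_mul_cancel₀ hP0.ne', ENNReal.rpow_one] at h2
    refine le_trans (le_of_eq (lintegral_congr fun x => ?_)) h2
    have hx : ‖ρ x ^ (ν/2)‖ₑ = ENNReal.ofReal (ρ x ^ (ν/2)) := by
      rw [← ofReal_norm, Real.norm_of_nonneg (Real.rpow_nonneg (hnn x) _)]
    rw [hx, ← ENNReal.ofReal_rpow_of_nonneg (hnn x) (by positivity : (0:ℝ) ≤ ν/2),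
      ← ENNReal.rpow_mul, hsdef]
  have hinterp : (∫⁻ x, F x ^ q) ≤ (∫⁻ x, F x ^ s) ^ β := by
    have h := ENNReal.lintegral_mul_norm_pow_le (μ := volume) hFmeas.aemeasurable
      hFs_meas.aemeasurable (by linarith : (0:ℝ) ≤ 1 - β) hβpos.le (by ring)
    rw [hF1, ENNReal.one_rpow, one_mul] at h
    refine le_trans (le_of_eq (lintegral_congr fun x => ?_)) h
    rw [← ENNReal.rpow_mul,
      ← ENNReal.rpow_add_of_nonneg _ _ (by linarith : (0:ℝ) ≤ 1 - β)
        (mul_nonneg (by linarith : (0:ℝ) ≤ s) hβpos.le), hqβ]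
  have hqeNe : ENNReal.ofReal q ≠ 0 := (ENNReal.ofReal_pos.mpr hq0).ne'
  rw [eLpNorm_eq_lintegral_rpow_enorm_toReal hqeNe ENNReal.ofReal_ne_top,
    ENNReal.toReal_ofReal hq0.le]
  have hnorm : ∀ x, ‖ρ x‖ₑ ^ q = F x ^ q := fun x => by
    rw [← ofReal_norm, Real.norm_of_nonneg (hnn x)]
  calc (∫⁻ x, ‖ρ x‖ₑ ^ q) ^ (1/q)
      = (∫⁻ x, F x ^ q) ^ (1/q) := by rw [lintegral_congr hnorm]
    _ ≤ ((M ^ P) ^ β) ^ (1/q) := by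
        refine ENNReal.rpow_le_rpow ?_ (by positivity)
        exact le_trans hinterp (ENNReal.rpow_le_rpow hSob' hβpos.le)
    _ = M ^ (2*μ) := by
        rw [← ENNReal.rpow_mul, ← ENNReal.rpow_mul, ← hexp]
        congr 1
        ring
    _ ≤ ENNReal.ofReal ((C₀^(2*μ)+1) + (C₀^(2*μ)+1) * G ^ (2*μ)) := by
        rw [hMdef, ENNReal.ofReal_rpow_of_nonneg (by positivity) h2μpos.le]
        exact ENNReal.ofReal_le_ofReal
          (stmt17_aux C₀ G (2*μ) hC₀ hG h2μpos h2μ1.le)
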